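/- arXiv:1510.01173 — 2 statements merged into one kernel-verified Lean document; each statement's English description precedes it below -/
import Mathlib

section
/- Let κ ∈ ℝ and let ψ : ℝ × ℝ → ℂ be twice continuously differentiable in (x,t). Define the equal-space Hamiltonian density function H : ℂ⁶ → ℂ by H(u, v, uₜ, vₜ, uₓ, vₓ) = (i/2)(u vₜ − v uₜ) − vₓ uₓ + κ (u v)², the six slots treated as independent complex variables with formal partial derivatives ∂₁,…,∂₆, and let j(x,t) = (ψ, ψ̄, ψₜ, ψ̄ₜ, ψₓ, ψ̄ₓ). Then at every (x,t) the variational derivative with respect to the first slot satisfies (∂₁H)(j(x,t)) − ∂ₜ[(∂₃H)(j(x,t))] = i ψ̄ₜ + 2κ|ψ|²ψ̄. Consequently, the space-Hamilton equation ∂ₓ(−ψ̄ₓ) = −((∂₁H)(j) − ∂ₜ[(∂₃H)(j)]) holds at every (x,t) if and only if ψ̄ satisfies −i ψ̄ₜ + ψ̄ₓₓ = 2κ|ψ|²ψ̄, i.e. if and only if ψ satisfies the nonlinear Schrödinger equation i ψₜ + ψₓₓ = 2κ|ψ|²ψ. -/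
open Complex ComplexConjugate

noncomputable section

/-- Partial derivative in the first (space) variable. -/
def px (f : ℝ × ℝ → ℂ) (p : ℝ × ℝ) : ℂ := deriv (fun x => f (x, p.2)) p.1

/-- Partial derivative in the second (time) variable. -/
def pt (f : ℝ × ℝ → ℂ) (p : ℝ × ℝ) : ℂ := deriv (fun t => f (p.1, t)) p.2

/-- Formal partial derivative of a function of six complex variables with respect to slot `j`. -/
def pd (H : (Fin 6 → ℂ) → ℂ) (j : Fin 6) (v : Fin 6 → ℂ) : ℂ :=
  deriv (fun z => H (Function.update v j z)) (v j)

/-- The equal-space Hamiltonian density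
H(u, v, uₜ, vₜ, uₓ, vₓ) = (i/2)(u vₜ − v uₜ) − vₓ uₓ + κ (u v)². -/
def Ham (κ : ℝ) (z : Fin 6 → ℂ) : ℂ :=
  I / 2 * (z 0 * z 3 - z 1 * z 2) - z 5 * z 4 + (κ : ℂ) * (z 0 * z 1) ^ 2

/-- The jet j(x,t) = (ψ, ψ̄, ψₜ, ψ̄ₜ, ψₓ, ψ̄ₓ). -/
def jet (ψ : ℝ × ℝ → ℂ) (p : ℝ × ℝ) : Fin 6 → ℂ :=
  ![ψ p, conj (ψ p), pt ψ p, pt (fun q => conj (ψ q)) p,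
    px ψ p, px (fun q => conj (ψ q)) p]

-- auxiliary lemmas

lemma deriv_conj' (f : ℝ → ℂ) (x : ℝ) :
    deriv (fun t => conj (f t)) x = conj (deriv f x) := by
  by_cases hf : DifferentiableAt ℝ f x
  · exact ((Complex.conjCLE.toContinuousLinearMap.hasFDerivAt.comp_hasDerivAt x
      hf.hasDerivAt)).deriv
  · have hnf : ¬ DifferentiableAt ℝ (fun t => conj (f t)) x := by
      intro h
      have h2 : DifferentiableAt ℝ (fun t => conj (conj (f t))) x :=
        (Complex.conjCLE.differentiable.differentiableAt).comp x h
      simp only [Complex.conj_conj] at h2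
      exact hf h2
    rw [deriv_zero_of_not_differentiableAt hf,
      deriv_zero_of_not_differentiableAt hnf, map_zero]

lemma pd_zero (κ : ℝ) (v : Fin 6 → ℂ) :
    pd (Ham κ) 0 v = I / 2 * v 3 + 2 * (κ : ℂ) * v 0 * (v 1) ^ 2 := by
  have he : (fun z => Ham κ (Function.update v 0 z))
      = fun z => I / 2 * (z * v 3 - v 1 * v 2) - v 5 * v 4 + (κ : ℂ) * (z * v 1) ^ 2 := by
    funext z
    simp [Ham, Function.update_apply]
  have h := (((((hasDerivAt_id (v 0)).mul_const (v 3)).sub_const (v 1 * v 2)).const_mul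
      (I / 2)).sub_const (v 5 * v 4)).add
      ((((hasDerivAt_id (v 0)).mul_const (v 1)).pow 2).const_mul (κ : ℂ))
  have h' := h.deriv
  simp only [id_eq] at h'
  rw [pd, he]
  erw [h']
  push_cast
  ring

lemma pd_two (κ : ℝ) (v : Fin 6 → ℂ) :
    pd (Ham κ) 2 v = -(I / 2) * v 1 := by
  have he : (fun z => Ham κ (Function.update v 2 z))
      = fun z => I / 2 * (v 0 * v 3 - v 1 * z) - v 5 * v 4 + (κ : ℂ) * (v 0 * v 1) ^ 2 := by
    funext z
    simp [Ham, Function.update_apply]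
  have h := ((((hasDerivAt_const (v 2) (v 0 * v 3)).sub
      ((hasDerivAt_id (v 2)).const_mul (v 1))).const_mul (I / 2)).sub_const
      (v 5 * v 4)).add_const ((κ : ℂ) * (v 0 * v 1) ^ 2)
  have h' := h.deriv
  simp only [id_eq] at h'
  rw [pd, he]
  erw [h']
  ring

lemma pt_conj (ψ : ℝ × ℝ → ℂ) (p : ℝ × ℝ) :
    pt (fun q => conj (ψ q)) p = conj (pt ψ p) := by
  simp only [pt]
  exact deriv_conj' (fun t => ψ (p.1, t)) p.2

lemma px_conj (ψ : ℝ × ℝ → ℂ) (p : ℝ × ℝ) :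
    px (fun q => conj (ψ q)) p = conj (px ψ p) := by
  simp only [px]
  exact deriv_conj' (fun x => ψ (x, p.2)) p.1

lemma pxpx_conj (ψ : ℝ × ℝ → ℂ) (p : ℝ × ℝ) :
    px (px (fun q => conj (ψ q))) p = conj (px (px ψ) p) := by
  have h1 : px (fun q => conj (ψ q)) = fun q => conj (px ψ q) := funext (px_conj ψ)
  rw [h1]
  exact px_conj (px ψ) p

/-- key variational-derivative computation -/
lemma key (κ : ℝ) (ψ : ℝ × ℝ → ℂ) (p : ℝ × ℝ) :
    pd (Ham κ) 0 (jet ψ p) - pt (fun q => pd (Ham κ) 2 (jet ψ q)) p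
      = I * pt (fun q => conj (ψ q)) p
          + 2 * (κ : ℂ) * (normSq (ψ p) : ℂ) * conj (ψ p) := by
  have h2 : (fun q => pd (Ham κ) 2 (jet ψ q)) = fun q => -(I / 2) * conj (ψ q) := by
    funext q
    rw [pd_two]
    simp [jet]
  have hpt : pt (fun q => -(I / 2) * conj (ψ q)) p
      = -(I / 2) * pt (fun q => conj (ψ q)) p := by
    simp only [pt]
    rw [deriv_const_mul_field]
  rw [h2, hpt, pd_zero]
  simp only [jet, Matrix.cons_val_zero, Matrix.cons_val_one, Matrix.head_cons,
    Matrix.cons_val_two, Matrix.tail_cons, Matrix.cons_val_three]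
  have hns : (normSq (ψ p) : ℂ) = ψ p * conj (ψ p) := (Complex.mul_conj (ψ p)).symm
  rw [hns]
  ring

/-- The variational derivative of the equal-space Hamiltonian with respect to the first slot
equals i ψ̄ₜ + 2κ|ψ|²ψ̄; consequently the space-Hamilton equation ∂ₓ(−ψ̄ₓ) = −(δH/δψ) holds
iff ψ̄ satisfies −i ψ̄ₜ + ψ̄ₓₓ = 2κ|ψ|²ψ̄, i.e. iff ψ satisfies NLS. -/
theorem space_Hamilton_NLS (κ : ℝ) (ψ : ℝ × ℝ → ℂ) (hψ : ContDiff ℝ 2 ψ) :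
    (∀ p : ℝ × ℝ,
        pd (Ham κ) 0 (jet ψ p) - pt (fun q => pd (Ham κ) 2 (jet ψ q)) p
          = I * pt (fun q => conj (ψ q)) p
              + 2 * (κ : ℂ) * (normSq (ψ p) : ℂ) * conj (ψ p))
    ∧ ((∀ p : ℝ × ℝ,
          px (fun q => -(px (fun r => conj (ψ r)) q)) p
            = -(pd (Ham κ) 0 (jet ψ p) - pt (fun q => pd (Ham κ) 2 (jet ψ q)) p))
        ↔ (∀ p : ℝ × ℝ,
            -I * pt (fun q => conj (ψ q)) p + px (px (fun q => conj (ψ q))) p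
              = 2 * (κ : ℂ) * (normSq (ψ p) : ℂ) * conj (ψ p)))
    ∧ ((∀ p : ℝ × ℝ,
          px (fun q => -(px (fun r => conj (ψ r)) q)) p
            = -(pd (Ham κ) 0 (jet ψ p) - pt (fun q => pd (Ham κ) 2 (jet ψ q)) p))
        ↔ (∀ p : ℝ × ℝ,
            I * pt ψ p + px (px ψ) p = 2 * (κ : ℂ) * (normSq (ψ p) : ℂ) * ψ p)) := by
  have hneg : ∀ p : ℝ × ℝ, px (fun q => -(px (fun r => conj (ψ r)) q)) p
      = -(px (px (fun q => conj (ψ q))) p) := by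
    intro p
    simp only [px]
    exact deriv.neg
  have hham : ∀ p : ℝ × ℝ,
      (px (fun q => -(px (fun r => conj (ψ r)) q)) p
        = -(pd (Ham κ) 0 (jet ψ p) - pt (fun q => pd (Ham κ) 2 (jet ψ q)) p))
      ↔ (-I * pt (fun q => conj (ψ q)) p + px (px (fun q => conj (ψ q))) p
          = 2 * (κ : ℂ) * (normSq (ψ p) : ℂ) * conj (ψ p)) := by
    intro p
    rw [hneg p, key κ ψ p]
    constructor
    · intro h; linear_combination -h
    · intro h; linear_combination -h
  refine ⟨fun p => key κ ψ p, ?_, ?_⟩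
  · exact forall_congr' hham
  · rw [forall_congr' hham]
    constructor
    · intro h p
      have := h p
      rw [pt_conj, pxpx_conj] at this
      have h2 := congrArg conj this
      simp only [map_add, map_mul, map_neg, conj_conj, conj_I, map_ofNat, conj_ofReal] at h2
      linear_combination h2
    · intro h p
      have := h p
      have h2 := congrArg conj this
      simp only [map_add, map_mul, map_neg, conj_conj, conj_I, map_ofNat, conj_ofReal] at h2
      rw [pt_conj, pxpx_conj]
      linear_combination h2
end
end

section
/- Let L > 0 and let U, V : ℝ × ℝ → M₂(ℂ) be continuously differentiable matrix-valued functions of (x,t) satisfying the zero-curvature condition ∂ₜU − ∂ₓV + UV − VU = 0 at every (x,t), together with the periodicity condition V(L, t) = V(−L, t) for all t. Let T : ℝ × ℝ → M₂(ℂ) be continuously differentiable with ∂ₓT(x,t) = U(x,t) T(x,t) and T(−L, t) = 1 (the identity matrix) for all t. Then the trace of the monodromy matrix, t ↦ trace T(L, t), is constant in t. -/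
open Matrix

noncomputable section

section helpers
variable {f : ℝ × ℝ → ℂ}

lemma hasDerivAt_sectx (hf : ContDiff ℝ 1 f) (p : ℝ × ℝ) :
    HasDerivAt (fun x => f (x, p.2)) ((fderiv ℝ f p) (1, 0)) p.1 :=
  (hf.differentiable one_ne_zero p).hasFDerivAt.comp_hasDerivAt p.1
    ((hasDerivAt_id p.1).prodMk (hasDerivAt_const p.1 p.2))

lemma hasDerivAt_sectt (hf : ContDiff ℝ 1 f) (p : ℝ × ℝ) :
    HasDerivAt (fun t => f (p.1, t)) ((fderiv ℝ f p) (0, 1)) p.2 :=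
  (hf.differentiable one_ne_zero p).hasFDerivAt.comp_hasDerivAt p.2
    ((hasDerivAt_const p.2 p.1).prodMk (hasDerivAt_id p.2))

lemma px_eq (hf : ContDiff ℝ 1 f) (p : ℝ × ℝ) : px f p = (fderiv ℝ f p) (1, 0) :=
  (hasDerivAt_sectx hf p).deriv

lemma pt_eq (hf : ContDiff ℝ 1 f) (p : ℝ × ℝ) : pt f p = (fderiv ℝ f p) (0, 1) :=
  (hasDerivAt_sectt hf p).deriv

lemma hasDerivAt_px (hf : ContDiff ℝ 1 f) (p : ℝ × ℝ) :
    HasDerivAt (fun x => f (x, p.2)) (px f p) p.1 := px_eq hf p ▸ hasDerivAt_sectx hf p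

lemma hasDerivAt_pt (hf : ContDiff ℝ 1 f) (p : ℝ × ℝ) :
    HasDerivAt (fun t => f (p.1, t)) (pt f p) p.2 := pt_eq hf p ▸ hasDerivAt_sectt hf p

lemma continuous_pt (hf : ContDiff ℝ 1 f) : Continuous (pt f) := by
  have : Continuous fun p => (fderiv ℝ f p) (0, 1) :=
    (hf.continuous_fderiv one_ne_zero).clm_apply continuous_const
  exact this.congr fun p => (pt_eq hf p).symm

end helpers

def ptM (A : ℝ × ℝ → Matrix (Fin 2) (Fin 2) ℂ) : ℝ × ℝ → Matrix (Fin 2) (Fin 2) ℂ :=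
  fun p => Matrix.of fun i j => pt (fun q => A q i j) p

def pxM (A : ℝ × ℝ → Matrix (Fin 2) (Fin 2) ℂ) : ℝ × ℝ → Matrix (Fin 2) (Fin 2) ℂ :=
  fun p => Matrix.of fun i j => px (fun q => A q i j) p

lemma hasDerivAt_matmul_entry {f g : ℝ → Matrix (Fin 2) (Fin 2) ℂ}
    {F' G' : Matrix (Fin 2) (Fin 2) ℂ} {x : ℝ}
    (hf : ∀ i j, HasDerivAt (fun x => f x i j) (F' i j) x)
    (hg : ∀ i j, HasDerivAt (fun x => g x i j) (G' i j) x) (i j : Fin 2) :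
    HasDerivAt (fun x => (f x * g x) i j) ((F' * g x + f x * G') i j) x := by
  have h := HasDerivAt.sum (u := Finset.univ) (fun k _ => (hf i k).mul (hg k j))
  have heq : (fun x => (f x * g x) i j) = fun x => ∑ k, f x i k * g x k j := by
    funext y; rw [Matrix.mul_apply]
  rw [heq]
  refine h.congr_deriv ?_
  simp [Matrix.mul_apply, Matrix.add_apply, Finset.sum_add_distrib]

set_option maxHeartbeats 1000000 in
/-- For a Lax pair (U, V) satisfying the zero-curvature condition with time-periodic V
at the endpoints, the trace of the monodromy matrix T(L, ·) of ∂ₓT = U T, T(−L, t) = 1,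
is constant in time. -/
theorem monodromy_trace_conserved (L : ℝ) (hL : L > 0)
    (U V T : ℝ × ℝ → Matrix (Fin 2) (Fin 2) ℂ)
    (hU : ∀ i j, ContDiff ℝ 1 fun p => U p i j)
    (hV : ∀ i j, ContDiff ℝ 1 fun p => V p i j)
    (hT : ∀ i j, ContDiff ℝ 1 fun p => T p i j)
    (hZC : ∀ (p : ℝ × ℝ) (i j : Fin 2),
      pt (fun q => U q i j) p - px (fun q => V q i j) p
        + (U p * V p - V p * U p) i j = 0)
    (hper : ∀ t : ℝ, V (L, t) = V (-L, t))
    (hTx : ∀ (p : ℝ × ℝ) (i j : Fin 2), px (fun q => T q i j) p = (U p * T p) i j)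
    (hTinit : ∀ t : ℝ, T (-L, t) = 1) :
    ∀ t₁ t₂ : ℝ, (T (L, t₁)).trace = (T (L, t₂)).trace := by
  have Tcont : ∀ i j, Continuous fun p : ℝ × ℝ => T p i j := fun i j => (hT i j).continuous
  have Ucont : ∀ i j, Continuous fun p : ℝ × ℝ => U p i j := fun i j => (hU i j).continuous
  have UTcont : ∀ i j, Continuous fun p : ℝ × ℝ => (U p * T p) i j := by
    intro i j
    simp only [Matrix.mul_apply]
    exact continuous_finset_sum _ fun k _ => (Ucont i k).mul (Tcont k j)
  set G : ℝ × ℝ → Matrix (Fin 2) (Fin 2) ℂ :=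
    fun p => ptM U p * T p + U p * ptM T p with hGdef
  have Gcont : ∀ i j, Continuous fun p => G p i j := by
    intro i j
    simp only [hGdef, Matrix.add_apply, Matrix.mul_apply, ptM, Matrix.of_apply]
    exact (continuous_finset_sum _ fun k _ => (continuous_pt (hU i k)).mul (Tcont k j)).add
      (continuous_finset_sum _ fun k _ => (Ucont i k).mul (continuous_pt (hT k j)))
  -- derivative of T entries in x
  have hTDx : ∀ (x t : ℝ) (i j : Fin 2),
      HasDerivAt (fun x' => T (x', t) i j) ((U (x, t) * T (x, t)) i j) x := by
    intro x t i j
    have h := hasDerivAt_px (hT i j) (x, t)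
    rwa [hTx (x, t) i j] at h
  -- integral representation of T
  have repr : ∀ (x t : ℝ) (i j : Fin 2),
      T (x, t) i j = (1 : Matrix (Fin 2) (Fin 2) ℂ) i j
        + ∫ s in (-L)..x, (U (s, t) * T (s, t)) i j := by
    intro x t i j
    have hint : IntervalIntegrable (fun s => (U (s, t) * T (s, t)) i j)
        MeasureTheory.volume (-L) x :=
      ((UTcont i j).comp (continuous_id.prodMk continuous_const)).intervalIntegrable _ _
    have h := intervalIntegral.integral_eq_sub_of_hasDerivAt
      (fun s _ => hTDx s t i j) hint
    rw [h, hTinit t]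
    ring
  -- differentiating T entries in time
  have stepB : ∀ (x t₀ : ℝ) (i j : Fin 2), HasDerivAt (fun t => T (x, t) i j)
      (∫ s in (-L)..x, G (s, t₀) i j) t₀ := by
    intro x t₀ i j
    obtain ⟨C, hC⟩ := (isCompact_uIcc (a := -L) (b := x)).prod
      (isCompact_closedBall t₀ 1) |>.exists_bound_of_continuousOn (Gcont i j).continuousOn
    have hmeas : ∀ᶠ t in nhds t₀, MeasureTheory.AEStronglyMeasurable
        (fun s => (U (s, t) * T (s, t)) i j)
        (MeasureTheory.volume.restrict (Set.uIoc (-L) x)) :=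
      Filter.Eventually.of_forall fun t =>
        (((UTcont i j).comp (continuous_id.prodMk continuous_const)).aestronglyMeasurable).restrict
    have hint : IntervalIntegrable (fun s => (U (s, t₀) * T (s, t₀)) i j)
        MeasureTheory.volume (-L) x :=
      ((UTcont i j).comp (continuous_id.prodMk continuous_const)).intervalIntegrable _ _
    have hmeas' : MeasureTheory.AEStronglyMeasurable (fun s => G (s, t₀) i j)
        (MeasureTheory.volume.restrict (Set.uIoc (-L) x)) :=
      (((Gcont i j).comp (continuous_id.prodMk continuous_const)).aestronglyMeasurable).restrict
    have hbound : ∀ᵐ s ∂MeasureTheory.volume, s ∈ Set.uIoc (-L) x →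
        ∀ t ∈ Metric.ball t₀ 1, ‖G (s, t) i j‖ ≤ C :=
      Filter.Eventually.of_forall fun s hs t ht =>
        hC (s, t) ⟨Set.uIoc_subset_uIcc hs, Metric.ball_subset_closedBall ht⟩
    have hdiff : ∀ᵐ s ∂MeasureTheory.volume, s ∈ Set.uIoc (-L) x →
        ∀ t ∈ Metric.ball t₀ 1,
        HasDerivAt (fun t => (U (s, t) * T (s, t)) i j) (G (s, t) i j) t := by
      refine Filter.Eventually.of_forall fun s _ t _ => ?_
      exact hasDerivAt_matmul_entry
        (fun a b => hasDerivAt_pt (hU a b) (s, t))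
        (fun a b => hasDerivAt_pt (hT a b) (s, t)) i j
    have key := (intervalIntegral.hasDerivAt_integral_of_dominated_loc_of_deriv_le (Metric.ball_mem_nhds t₀ one_pos)
      hmeas hint hmeas' hbound (intervalIntegrable_const) hdiff).2
    exact (key.const_add ((1 : Matrix (Fin 2) (Fin 2) ℂ) i j)).congr_of_eventuallyEq
      (Filter.Eventually.of_forall fun t => repr x t i j)
  have ptT_eq : ∀ (x t₀ : ℝ) (i j : Fin 2),
      pt (fun q => T q i j) (x, t₀) = ∫ s in (-L)..x, G (s, t₀) i j :=
    fun x t₀ i j => (stepB x t₀ i j).deriv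
  -- x-derivative of the time-derivative of T
  have stepC : ∀ (x t₀ : ℝ) (i j : Fin 2),
      HasDerivAt (fun x => ptM T (x, t₀) i j) (G (x, t₀) i j) x := by
    intro x t₀ i j
    have hGc : Continuous fun s => G (s, t₀) i j :=
      (Gcont i j).comp (continuous_id.prodMk continuous_const)
    have h := intervalIntegral.integral_hasDerivAt_right
      (hGc.intervalIntegrable (-L) x)
      hGc.stronglyMeasurable.stronglyMeasurableAtFilter
      hGc.continuousAt
    exact h.congr_of_eventuallyEq
      (Filter.Eventually.of_forall fun y => ptT_eq y t₀ i j)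
  -- main derivative computation
  have hd : ∀ t₀ : ℝ, HasDerivAt (fun t => (T (L, t)).trace) 0 t₀ := by
    intro t₀
    set Vc : Matrix (Fin 2) (Fin 2) ℂ := V (-L, t₀) with hVc
    set S : ℝ → Matrix (Fin 2) (Fin 2) ℂ :=
      fun x => ptM T (x, t₀) - V (x, t₀) * T (x, t₀) + T (x, t₀) * Vc with hS
    have hSderiv : ∀ (x : ℝ) (i j : Fin 2),
        HasDerivAt (fun x => S x i j) ((U (x, t₀) * S x) i j) x := by
      intro x i j
      have h1 := stepC x t₀ i j
      have h2 : HasDerivAt (fun x => (V (x, t₀) * T (x, t₀)) i j)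
          ((pxM V (x, t₀) * T (x, t₀) + V (x, t₀) * (U (x, t₀) * T (x, t₀))) i j) x :=
        hasDerivAt_matmul_entry (fun a b => hasDerivAt_px (hV a b) (x, t₀))
          (fun a b => hTDx x t₀ a b) i j
      have h3 : HasDerivAt (fun x => (T (x, t₀) * Vc) i j)
          ((U (x, t₀) * T (x, t₀) * Vc
            + T (x, t₀) * (0 : Matrix (Fin 2) (Fin 2) ℂ)) i j) x :=
        hasDerivAt_matmul_entry (fun a b => hTDx x t₀ a b)
          (fun a b => by simpa using hasDerivAt_const x (Vc a b)) i j
      have h := (h1.sub h2).add h3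
      have hzc : ptM U (x, t₀) - pxM V (x, t₀)
          + (U (x, t₀) * V (x, t₀) - V (x, t₀) * U (x, t₀)) = 0 := by
        ext a b
        simpa [ptM, pxM, Matrix.sub_apply, Matrix.add_apply] using hZC (x, t₀) a b
      have hU' : ptM U (x, t₀) = pxM V (x, t₀) - U (x, t₀) * V (x, t₀)
          + V (x, t₀) * U (x, t₀) := by
        have h2' : ptM U (x, t₀) - (pxM V (x, t₀) - U (x, t₀) * V (x, t₀)
            + V (x, t₀) * U (x, t₀)) = ptM U (x, t₀) - pxM V (x, t₀)
            + (U (x, t₀) * V (x, t₀) - V (x, t₀) * U (x, t₀)) := by abel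
        rw [← sub_eq_zero, h2', hzc]
      have hmat : U (x, t₀) * S x
          = G (x, t₀) - (pxM V (x, t₀) * T (x, t₀) + V (x, t₀) * (U (x, t₀) * T (x, t₀)))
            + ((U (x, t₀) * T (x, t₀)) * Vc + T (x, t₀) * 0) := by
        simp only [hS, hGdef]
        rw [hU']
        noncomm_ring
      have hfun : (fun x => S x i j) = fun x => ptM T (x, t₀) i j
          - (V (x, t₀) * T (x, t₀)) i j + (T (x, t₀) * Vc) i j := by
        funext y
        simp [hS, Matrix.add_apply, Matrix.sub_apply]
      rw [hfun]
      refine h.congr_deriv ?_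
      rw [hmat]
      simp [Matrix.sub_apply, Matrix.add_apply]
    -- Lipschitz field
    set c : ℝ → ℝ := fun x => max (-L) (min L x) with hc
    have hcmem : ∀ x, c x ∈ Set.Icc (-L) L :=
      fun x => ⟨le_max_left _ _, max_le (by linarith) (min_le_left _ _)⟩
    have hcx : ∀ x ∈ Set.Icc (-L) L, c x = x := by
      intro x hx
      simp [hc, min_eq_right hx.2, max_eq_right hx.1]
    obtain ⟨C, hC⟩ := (isCompact_Icc (a := -L) (b := L)).exists_bound_of_continuousOn
      (f := fun s => (fun i j => U (s, t₀) i j : Fin 2 → Fin 2 → ℂ))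
      (Continuous.continuousOn (continuous_pi fun i => continuous_pi fun j =>
        (Ucont i j).comp (continuous_id.prodMk continuous_const)))
    have hC0 : 0 ≤ C :=
      le_trans (norm_nonneg _) (hC (-L) ⟨le_rfl, by linarith⟩)
    have hUb : ∀ (x : ℝ) (i k : Fin 2), ‖U (c x, t₀) i k‖ ≤ C := fun x i k =>
      le_trans (le_trans (norm_le_pi_norm _ k)
        (norm_le_pi_norm (fun a b => U (c x, t₀) a b) i)) (hC _ (hcmem x))
    set v : ℝ → (Fin 2 → Fin 2 → ℂ) → (Fin 2 → Fin 2 → ℂ) :=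
      fun x y => fun i j => ∑ k, U (c x, t₀) i k * y k j with hv
    have hvnorm : ∀ (x : ℝ) (z : Fin 2 → Fin 2 → ℂ), ‖v x z‖ ≤ 2 * C * ‖z‖ := by
      intro x z
      have h2 : 0 ≤ 2 * C * ‖z‖ := by positivity
      rw [pi_norm_le_iff_of_nonneg h2]
      intro i
      rw [pi_norm_le_iff_of_nonneg h2]
      intro j
      calc ‖∑ k, U (c x, t₀) i k * z k j‖ ≤ ∑ k, ‖U (c x, t₀) i k * z k j‖ :=
            norm_sum_le _ _
        _ ≤ ∑ _k : Fin 2, C * ‖z‖ := Finset.sum_le_sum fun k _ => by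
            rw [norm_mul]
            exact mul_le_mul (hUb x i k)
              (le_trans (norm_le_pi_norm _ j) (norm_le_pi_norm z k))
              (norm_nonneg _) hC0
        _ = 2 * C * ‖z‖ := by simp [Finset.sum_const]; ring
    have hlip : ∀ x : ℝ, LipschitzWith (Real.toNNReal (2 * C)) (v x) := by
      intro x
      apply LipschitzWith.of_dist_le_mul
      intro y y'
      rw [dist_eq_norm, dist_eq_norm]
      have hsub : v x y - v x y' = v x (y - y') := by
        funext i j
        simp [hv, ← Finset.sum_sub_distrib, mul_sub]
        ring
      rw [hsub]
      calc ‖v x (y - y')‖ ≤ 2 * C * ‖y - y'‖ := hvnorm x _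
        _ = (Real.toNNReal (2 * C) : ℝ) * ‖y - y'‖ := by
            rw [Real.coe_toNNReal _ (by positivity)]
    have hSf' : ∀ x ∈ Set.Icc (-L) L,
        HasDerivAt (fun x (i j : Fin 2) => S x i j)
          (v x (fun i j : Fin 2 => S x i j)) x := by
      intro x hx
      rw [hasDerivAt_pi]
      intro i
      rw [hasDerivAt_pi]
      intro j
      have hval : v x (fun i j : Fin 2 => S x i j) i j = (U (x, t₀) * S x) i j := by
        simp [hv, Matrix.mul_apply, hcx x hx]
      exact hval ▸ hSderiv x i j
    have hSfcont : Continuous (fun x (i j : Fin 2) => S x i j) :=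
      continuous_pi fun i => continuous_pi fun j =>
        continuous_iff_continuousAt.mpr fun x => (hSderiv x i j).continuousAt
    have hS0 : (fun i j : Fin 2 => S (-L) i j) = 0 := by
      funext i j
      show S (-L) i j = 0
      have h1 : pt (fun q => T q i j) (-L, t₀) = 0 := by
        have he : (fun t => T ((-L : ℝ), t) i j)
            = fun _ => (1 : Matrix (Fin 2) (Fin 2) ℂ) i j :=
          funext fun t => by rw [hTinit t]
        simp [pt, he]
      simp only [hS]
      rw [hTinit t₀, ← hVc]
      simp [Matrix.sub_apply, Matrix.add_apply, Matrix.mul_one, Matrix.one_mul, ptM, h1]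
    have huniq := ODE_solution_unique (v := v) (K := Real.toNNReal (2 * C)) hlip
      (f := fun x (i j : Fin 2) => S x i j)
      (g := fun _ => (0 : Fin 2 → Fin 2 → ℂ)) (a := -L) (b := L)
      hSfcont.continuousOn
      (fun x hx => (hSf' x ⟨hx.1, le_of_lt hx.2⟩).hasDerivWithinAt)
      continuous_const.continuousOn
      (fun x _ => by
        have hz : v x ((fun _ => (0 : Fin 2 → Fin 2 → ℂ)) x) = 0 := by
          funext i j; simp [hv]
        rw [hz]
        exact (hasDerivAt_const x _).hasDerivWithinAt)
      (by exact hS0)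
    have hSL : S L = 0 := by
      have hL' := huniq (Set.right_mem_Icc.mpr (by linarith))
      ext i j
      exact congrFun (congrFun hL' i) j
    have hkey : ptM T (L, t₀) = V (L, t₀) * T (L, t₀) - T (L, t₀) * V (L, t₀) := by
      have h' : ptM T (L, t₀) - V (L, t₀) * T (L, t₀) + T (L, t₀) * Vc = 0 := hSL
      have hVcL : Vc = V (L, t₀) := by rw [hVc, hper t₀]
      rw [hVcL] at h'
      have h2' : ptM T (L, t₀) - (V (L, t₀) * T (L, t₀) - T (L, t₀) * V (L, t₀))
          = ptM T (L, t₀) - V (L, t₀) * T (L, t₀) + T (L, t₀) * V (L, t₀) := by abel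
      rw [← sub_eq_zero, h2', h']
    have hsum := HasDerivAt.sum (u := Finset.univ)
      (fun i (_ : i ∈ Finset.univ) => hasDerivAt_pt (hT i i) ((L : ℝ), t₀))
    have hval : ∑ i : Fin 2, pt (fun q => T q i i) (L, t₀) = 0 := by
      have htreq : ∑ i : Fin 2, pt (fun q => T q i i) (L, t₀) = (ptM T (L, t₀)).trace := by
        simp [Matrix.trace, Matrix.diag, ptM]
      rw [htreq, hkey]
      simp [Matrix.trace_sub, Matrix.trace_mul_comm (V (L, t₀)) (T (L, t₀))]
    have hfn : (fun t => (T (L, t)).trace) = fun t => ∑ i : Fin 2, T (L, t) i i := by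
      funext t; simp [Matrix.trace, Matrix.diag]
    rw [hfn]
    exact hval ▸ hsum
  intro t₁ t₂
  exact is_const_of_deriv_eq_zero (fun t => (hd t).differentiableAt)
    (fun t => (hd t).deriv) t₁ t₂
end
end
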